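/- Let I ⊆ [0,1] be a set of real numbers and let c > 0 be a real number. Then D_c(D(I) ∪ D_c(I)) ⊆ D_c(I) ∪ {1}. -/

import Mathlib

open Finset in
/-- `I_+`: sums `∑ nᵢ aᵢ ≤ 1` with `aᵢ ∈ I`, `nᵢ` positive integers, together with `0`. -/
def Iplus (I : Set ℝ) : Set ℝ :=
  {x : ℝ | x ≤ 1 ∧ ∃ (r : ℕ), 0 < r ∧ ∃ (a : Fin r → ℝ) (n : Fin r → ℕ),
    (∀ i, a i ∈ I) ∧ (∀ i, 0 < n i) ∧ x = ∑ i, (n i : ℝ) * a i} ∪ {0}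

/-- `D(I) = {(m-1+f)/m ≤ 1 : m ∈ ℕ₊, f ∈ I_+}`. -/
def Dset (I : Set ℝ) : Set ℝ :=
  {x : ℝ | ∃ (m : ℕ) (f : ℝ), 0 < m ∧ f ∈ Iplus I ∧ x = ((m : ℝ) - 1 + f) / m} ∩ Set.Iic 1

/-- `D_c(I) = {(m-1+f+kc)/m ≤ 1 : m, k ∈ ℕ₊, f ∈ I_+}`. -/
def Dc (c : ℝ) (I : Set ℝ) : Set ℝ :=
  {x : ℝ | ∃ (m k : ℕ) (f : ℝ), 0 < m ∧ 0 < k ∧ f ∈ Iplus I ∧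
    x = ((m : ℝ) - 1 + f + (k : ℝ) * c) / m} ∩ Set.Iic 1

lemma closure_nonneg_aux {I : Set ℝ} (hI : I ⊆ Set.Icc 0 1) {x : ℝ}
    (hx : x ∈ AddSubmonoid.closure I) : 0 ≤ x :=
  AddSubmonoid.closure_induction (fun a ha => (hI ha).1) le_rfl
    (fun _ _ _ _ h1 h2 => by linarith) hx

lemma Iplus_mem_closure {I : Set ℝ} {f : ℝ} (hf : f ∈ Iplus I) :
    f ∈ AddSubmonoid.closure I ∧ f ≤ 1 := by
  rcases hf with ⟨hle, r, hr, a, n, ha, hn, hsum⟩ | hf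
  · refine ⟨?_, hle⟩
    rw [hsum]
    exact sum_mem fun i _ => by
      rw [← nsmul_eq_mul]
      exact AddSubmonoid.nsmul_mem _ (AddSubmonoid.subset_closure (ha i)) _
  · simp only [Set.mem_singleton_iff] at hf
    subst hf
    exact ⟨zero_mem _, zero_le_one⟩

lemma closure_mem_Iplus {I : Set ℝ} {f : ℝ} (hf : f ∈ AddSubmonoid.closure I)
    (hle : f ≤ 1) : f ∈ Iplus I := by
  obtain ⟨l, hl, hsum⟩ := AddSubmonoid.exists_list_of_mem_closure hf
  rcases l with _ | ⟨b, t⟩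
  · right
    simp only [List.sum_nil] at hsum
    simp [← hsum]
  · left
    refine ⟨hle, (b :: t).length, by simp, fun i => (b :: t).get i, fun _ => 1,
      fun i => hl _ (List.get_mem _ i), fun i => one_pos, ?_⟩
    simp only [Nat.cast_one, one_mul]
    rw [← hsum]
    simpa using (Fin.sum_univ_getElem (b :: t)).symm

lemma memJ {I : Set ℝ} {c : ℝ} {b : ℝ} (hb : b ∈ Dset I ∪ Dc c I) :
    ∃ (m' k' : ℕ) (f' : ℝ), 1 ≤ m' ∧ f' ∈ AddSubmonoid.closure I ∧
      b = ((m' : ℝ) - 1 + f' + (k' : ℝ) * c) / m' := by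
  rcases hb with ⟨⟨m, f, hm, hf, rfl⟩, -⟩ | ⟨⟨m, k, f, hm, hk, hf, rfl⟩, -⟩
  · exact ⟨m, 0, f, hm, (Iplus_mem_closure hf).1, by norm_num⟩
  · exact ⟨m, k, f, hm, (Iplus_mem_closure hf).1, rfl⟩

lemma key_list {I : Set ℝ} (hI : I ⊆ Set.Icc 0 1) {c : ℝ} (hc : 0 < c) :
    ∀ l : List ℝ,
    (∀ b ∈ l, ∃ (m' k' : ℕ) (f' : ℝ), 1 ≤ m' ∧ f' ∈ AddSubmonoid.closure I ∧
      b = ((m' : ℝ) - 1 + f' + (k' : ℝ) * c) / m') →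
    l.sum < 1 →
    ∃ (m' k' K : ℕ) (f' F : ℝ), 1 ≤ m' ∧ f' ∈ AddSubmonoid.closure I ∧
      F ∈ AddSubmonoid.closure I ∧
      l.sum = ((m' : ℝ) - 1 + f' + (k' : ℝ) * c) / m' + F + (K : ℝ) * c := by
  intro l
  induction l with
  | nil =>
    intro _ _
    exact ⟨1, 0, 0, 0, 0, le_rfl, zero_mem _, zero_mem _, by norm_num⟩
  | cons b t ih =>
    intro hmem hsum
    rw [List.sum_cons] at hsum
    obtain ⟨mb, kb, fb, hmb, hfb, hbeq⟩ := hmem b (List.mem_cons_self)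
    have hfb0 : 0 ≤ fb := closure_nonneg_aux hI hfb
    have h1b : (1 : ℝ) ≤ (mb : ℝ) := by exact_mod_cast hmb
    have hmb0 : (0 : ℝ) < (mb : ℝ) := by linarith
    have hkbc : 0 ≤ (kb : ℝ) * c := by positivity
    have hb0 : 0 ≤ b := by
      rw [hbeq]
      apply div_nonneg _ hmb0.le
      linarith
    have htsum : t.sum < 1 := by linarith
    obtain ⟨m', k', K, f', F, hm', hf', hF, heq⟩ :=
      ih (fun x hx => hmem x (List.mem_cons_of_mem _ hx)) htsum
    have hf'0 : 0 ≤ f' := closure_nonneg_aux hI hf'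
    have hF0 : 0 ≤ F := closure_nonneg_aux hI hF
    have h1' : (1 : ℝ) ≤ (m' : ℝ) := by exact_mod_cast hm'
    have hm'0 : (0 : ℝ) < (m' : ℝ) := by linarith
    have hk'c : 0 ≤ (k' : ℝ) * c := by positivity
    have hKc : 0 ≤ (K : ℝ) * c := by positivity
    by_cases hmb1 : mb = 1
    · refine ⟨m', k', K + kb, f', F + fb, hm', hf', add_mem hF hfb, ?_⟩
      subst hmb1
      rw [List.sum_cons, heq, hbeq]
      push_cast
      ring
    · -- mb ≥ 2; then m' must be 1
      have hmb2 : (2 : ℝ) ≤ (mb : ℝ) := by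
        have : 2 ≤ mb := by omega
        exact_mod_cast this
      have hbhalf : (1 / 2 : ℝ) ≤ b := by
        rw [hbeq, le_div_iff₀ hmb0]
        nlinarith
      have hm'1 : m' = 1 := by
        by_contra h
        have hm'2 : (2 : ℝ) ≤ (m' : ℝ) := by
          have : 2 ≤ m' := by omega
          exact_mod_cast this
        have hthalf : (1 / 2 : ℝ) ≤ t.sum := by
          rw [heq]
          have : (1 / 2 : ℝ) ≤ ((m' : ℝ) - 1 + f' + (k' : ℝ) * c) / m' := by
            rw [le_div_iff₀ hm'0]
            nlinarith
          linarith
        linarith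
      subst hm'1
      refine ⟨mb, kb, K + k', fb, F + f', hmb, hfb, add_mem hF hf', ?_⟩
      rw [List.sum_cons, heq, hbeq]
      push_cast
      ring

theorem Dc_of_union (I : Set ℝ) (hI : I ⊆ Set.Icc 0 1) (c : ℝ) (hc : 0 < c) :
    Dc c (Dset I ∪ Dc c I) ⊆ Dc c I ∪ {1} := by
  rintro x ⟨⟨m, k, f, hm, hk, hf, rfl⟩, hx1⟩
  left
  have hm0 : (0 : ℝ) < (m : ℝ) := by exact_mod_cast hm
  have hxle : (m : ℝ) - 1 + f + (k : ℝ) * c ≤ m := by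
    have := hx1
    rw [Set.mem_Iic, div_le_one hm0] at this
    linarith
  have hkc : 0 < (k : ℝ) * c := by
    have hk0 : (0 : ℝ) < (k : ℝ) := by exact_mod_cast hk
    positivity
  have hflt : f < 1 := by linarith
  obtain ⟨l, hl, hsum⟩ :=
    AddSubmonoid.exists_list_of_mem_closure (Iplus_mem_closure hf).1
  obtain ⟨m', k', K, f', F, hm', hf', hF, heq⟩ :=
    key_list hI hc l (fun b hb => memJ (hl b hb)) (by rw [hsum]; exact hflt)
  rw [hsum] at heq
  have h1' : (1 : ℝ) ≤ (m' : ℝ) := by exact_mod_cast hm'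
  have hm'0 : (0 : ℝ) < (m' : ℝ) := by linarith
  have hf'0 : 0 ≤ f' := closure_nonneg_aux hI hf'
  have hF0 : 0 ≤ F := closure_nonneg_aux hI hF
  have hk'c : 0 ≤ (k' : ℝ) * c := by positivity
  have hKc : 0 ≤ (K : ℝ) * c := by positivity
  have hmul : (m' : ℝ) * f = (m' : ℝ) - 1 + f' + (k' : ℝ) * c
      + (m' : ℝ) * F + (m' : ℝ) * ((K : ℝ) * c) := by
    rw [heq]
    field_simp
  have hbound : f' + (m' : ℝ) * F ≤ 1 := by nlinarith
  have hmem : f' + (m' : ℝ) * F ∈ Iplus I := by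
    refine closure_mem_Iplus (add_mem hf' ?_) hbound
    rw [← nsmul_eq_mul]
    exact AddSubmonoid.nsmul_mem _ hF _
  refine ⟨⟨m * m', k' + m' * (K + k), f' + (m' : ℝ) * F,
    Nat.mul_pos hm (by omega), ?_, hmem, ?_⟩, hx1⟩
  · have : 0 < m' * (K + k) := Nat.mul_pos (by omega) (by omega)
    omega
  · rw [heq]
    have hmne : (m : ℝ) ≠ 0 := hm0.ne'
    have hm'ne : (m' : ℝ) ≠ 0 := hm'0.ne'
    push_cast
    field_simp
    ring
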